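/- Let y be a fractional cache state and let X be a random vector taking values in {0,1}^{2N} such that for every i ∈ {1,…,K−1}: E[ ∏_{j ∈ I_i} (1 − X_{π_j}/(k − σ_i)) ] ≤ ∏_{j ∈ I_i} (1 − y_{π_j}/(k − σ_i)). Then E[ L(X) ] ≥ L(y). -/

import Mathlib

open MeasureTheory

namespace ACAI

/-- `sigma N π i` = number of indices `j ∈ {1,…,i}` with `π j > N`, i.e. the number of
objects among the `i` cheapest that are served from the server. -/
def sigma (N : ℕ) (π : ℕ → ℕ) (i : ℕ) : ℕ :=
  ((Finset.Icc 1 i).filter (fun j => N < π j)).card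

/-- `Kmin N k π` = least index `i` with `sigma N π i = k`. -/
noncomputable def Kmin (N k : ℕ) (π : ℕ → ℕ) : ℕ :=
  sInf {i | sigma N π i = k}

/-- `alpha c π i = c (π (i+1)) - c (π i)`. -/
noncomputable def alpha (c : ℕ → ℝ) (π : ℕ → ℕ) (i : ℕ) : ℝ :=
  c (π (i + 1)) - c (π i)

/-- A fractional cache state: `y ∈ [0,1]^{2N}` with `∑_{i=1}^{N} y i = h` and
`y (i+N) = 1 - y i` for `i ∈ {1,…,N}`. -/
def IsFrac (N h : ℕ) (y : ℕ → ℝ) : Prop :=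
  (∀ i ∈ Finset.Icc 1 (2 * N), y i ∈ Set.Icc (0 : ℝ) 1) ∧
  (∑ i ∈ Finset.Icc 1 N, y i = (h : ℝ)) ∧
  (∀ i ∈ Finset.Icc 1 N, y (i + N) = 1 - y i)

/-- An integral cache state: a fractional cache state with `{0,1}` coordinates. -/
def IsInt (N h : ℕ) (y : ℕ → ℝ) : Prop :=
  IsFrac N h y ∧ ∀ i ∈ Finset.Icc 1 (2 * N), y i = 0 ∨ y i = 1

/-- A request over the augmented catalog `U = {1,…,2N}`: nonnegative costs `c` with
`c (i+N) = c i + cf` for catalog objects `i ∈ {1,…,N}`, and a bijection `π` of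
`{1,…,2N}` sorting the costs nondecreasingly and placing each `i ∈ {1,…,N}` before
`i + N`. -/
def Request (N : ℕ) (cf : ℝ) (c : ℕ → ℝ) (π : ℕ → ℕ) : Prop :=
  (∀ i ∈ Finset.Icc 1 (2 * N), 0 ≤ c i) ∧
  (∀ i ∈ Finset.Icc 1 N, c (i + N) = c i + cf) ∧
  Set.BijOn π (Set.Icc 1 (2 * N)) (Set.Icc 1 (2 * N)) ∧
  (∀ i, 1 ≤ i → i < 2 * N → c (π i) ≤ c (π (i + 1))) ∧
  (∀ j l, j ∈ Set.Icc 1 (2 * N) → l ∈ Set.Icc 1 (2 * N) →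
    π j ≤ N → π l = π j + N → j < l)


private lemma sigma_succ_le (N : ℕ) (π : ℕ → ℕ) (i : ℕ) :
    sigma N π (i + 1) ≤ sigma N π i + 1 := by
  unfold sigma
  rw [← Finset.insert_Icc_right_eq_Icc_add_one (by omega), Finset.filter_insert]
  split
  · exact le_trans (Finset.card_insert_le _ _) (by omega)
  · omega

private lemma nat_ivt (f : ℕ → ℕ) (h0 : f 0 = 0) (hstep : ∀ m, f (m+1) ≤ f m + 1)
    (k n : ℕ) (hk : k ≤ f n) : ∃ m, m ≤ n ∧ f m = k := by
  induction n with
  | zero => exact ⟨0, le_refl 0, by omega⟩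
  | succ n ih =>
    by_cases hc : k ≤ f n
    · obtain ⟨m, hm, hfm⟩ := ih hc
      exact ⟨m, by omega, hfm⟩
    · exact ⟨n+1, le_refl _, by have := hstep n; omega⟩

private lemma sigma_two_mul (N : ℕ) (π : ℕ → ℕ)
    (hbij : Set.BijOn π (Set.Icc 1 (2 * N)) (Set.Icc 1 (2 * N))) :
    sigma N π (2 * N) = N := by
  have h : sigma N π (2 * N) = (Finset.Icc (N+1) (2*N)).card := by
    apply Finset.card_nbij (i := π)
    · intro a ha
      simp only [Finset.mem_filter, Finset.mem_Icc, Finset.coe_filter, Set.mem_setOf_eq, Finset.coe_Icc, Set.mem_Icc, Finset.mem_coe] at ha ⊢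
      have := hbij.mapsTo (show a ∈ Set.Icc 1 (2*N) by simp [Set.mem_Icc]; omega)
      simp only [Set.mem_Icc] at this
      omega
    · intro a ha b hb hab
      simp only [Finset.coe_filter, Set.mem_setOf_eq, Finset.mem_Icc] at ha hb
      exact hbij.injOn (by simp only [Set.mem_Icc]; omega) (by simp only [Set.mem_Icc]; omega) hab
    · intro b hb
      simp only [Finset.coe_Icc, Set.mem_Icc] at hb
      obtain ⟨a, ha, rfl⟩ := hbij.surjOn
        (show b ∈ Set.Icc 1 (2*N) by simp only [Set.mem_Icc]; omega)
      simp only [Set.mem_Icc] at ha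
      refine ⟨a, ?_, rfl⟩
      simp only [Finset.coe_filter, Set.mem_setOf_eq, Finset.mem_Icc]
      omega
  rw [h, Nat.card_Icc]; omega

/-- The caching gain
`G(y) = ∑_{i=1}^{K-1} α_i · min { k - σ_i, (∑_{j=1}^{i} y_{π j}) - σ_i }`. -/
noncomputable def gain (N k : ℕ) (c : ℕ → ℝ) (π : ℕ → ℕ) (y : ℕ → ℝ) : ℝ :=
  ∑ i ∈ Finset.Icc 1 (Kmin N k π - 1),
    alpha c π i *
      min ((k : ℝ) - sigma N π i) ((∑ j ∈ Finset.Icc 1 i, y (π j)) - sigma N π i)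

/-- `Iset N π i = { j ∈ {1,…,i} : π j ≤ N and π j + N ∉ {π 1, …, π i} }`. -/
def Iset (N : ℕ) (π : ℕ → ℕ) (i : ℕ) : Finset ℕ :=
  (Finset.Icc 1 i).filter (fun j => π j ≤ N ∧ ∀ l ∈ (Finset.Icc 1 i : Finset ℕ), π l ≠ π j + N)

/-- The auxiliary (multilinear) gain
`L(y) = ∑_{i=1}^{K-1} α_i (k - σ_i) (1 - ∏_{j ∈ I_i} (1 - y_{π j}/(k - σ_i)))`. -/
noncomputable def aux (N k : ℕ) (c : ℕ → ℝ) (π : ℕ → ℕ) (y : ℕ → ℝ) : ℝ :=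
  ∑ i ∈ Finset.Icc 1 (Kmin N k π - 1),
    alpha c π i * ((k : ℝ) - sigma N π i) *
      (1 - ∏ j ∈ Iset N π i, (1 - y (π j) / ((k : ℝ) - sigma N π i)))

/-- **Auxiliary gain under negatively-correlated rounding (DepRound property).**
If `X` is a random `{0,1}^{2N}`-valued vector satisfying, for each `i ∈ {1,…,K-1}`,
`E[∏_{j ∈ I_i} (1 - X_{π j}/(k - σ_i))] ≤ ∏_{j ∈ I_i} (1 - y_{π j}/(k - σ_i))`,
then `E[L(X)] ≥ L(y)`. -/
theorem expected_aux_ge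
    {Ω : Type*} [MeasurableSpace Ω] (μ : Measure Ω) [IsProbabilityMeasure μ]
    (N k h : ℕ) (hN : 0 < N) (hk : 0 < k) (hkh : k ≤ h) (hhN : h ≤ N)
    (cf : ℝ) (hcf : 0 < cf) (c : ℕ → ℝ) (π : ℕ → ℕ)
    (hreq : Request N cf c π)
    (y : ℕ → ℝ) (hy : IsFrac N h y)
    (X : Ω → ℕ → ℝ)
    (hXmeas : ∀ i, Measurable fun ω => X ω i)
    (hX01 : ∀ ω, ∀ i ∈ Finset.Icc 1 (2 * N), X ω i = 0 ∨ X ω i = 1)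
    (hprod : ∀ i ∈ Finset.Icc 1 (Kmin N k π - 1),
      (∫ ω, ∏ j ∈ Iset N π i, (1 - X ω (π j) / ((k : ℝ) - sigma N π i)) ∂μ)
        ≤ ∏ j ∈ Iset N π i, (1 - y (π j) / ((k : ℝ) - sigma N π i))) :
    aux N k c π y ≤ ∫ ω, aux N k c π (X ω) ∂μ := by
  obtain ⟨hc0, hcfadd, hbij, hcmono, hbefore⟩ := hreq
  have hσ0 : sigma N π 0 = 0 := by simp [sigma]
  have hσstep := sigma_succ_le N π
  have hσ2N : sigma N π (2*N) = N := sigma_two_mul N π hbij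
  have hkN : k ≤ N := le_trans hkh hhN
  obtain ⟨m0, hm0le, hm0⟩ := nat_ivt (sigma N π) hσ0 hσstep k (2*N) (by omega)
  have hKle : Kmin N k π ≤ 2*N := le_trans (Nat.sInf_le hm0) hm0le
  have hσlt : ∀ i, i < Kmin N k π → sigma N π i < k := by
    intro i hilt
    by_contra hcon
    push_neg at hcon
    obtain ⟨m, hmle, hm⟩ := nat_ivt (sigma N π) hσ0 hσstep k i hcon
    have : Kmin N k π ≤ m := Nat.sInf_le hm
    omega
  have hmain : ∀ i ∈ Finset.Icc 1 (Kmin N k π - 1),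
      0 ≤ alpha c π i ∧ 1 ≤ ((k:ℝ) - sigma N π i) ∧
      Integrable (fun ω => ∏ j ∈ Iset N π i,
        (1 - X ω (π j) / ((k:ℝ) - sigma N π i))) μ := by
    intro i hi
    simp only [Finset.mem_Icc] at hi
    have hiK : i < Kmin N k π := by omega
    have hi2N : i < 2*N := by omega
    have hσi := hσlt i hiK
    have hr : (1:ℝ) ≤ (k:ℝ) - sigma N π i := by
      have : (sigma N π i : ℝ) + 1 ≤ k := by exact_mod_cast hσi
      linarith
    refine ⟨sub_nonneg.2 (hcmono i hi.1 hi2N), hr, ?_⟩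
    have hmeas : Measurable (fun ω => ∏ j ∈ Iset N π i,
        (1 - X ω (π j) / ((k:ℝ) - sigma N π i))) :=
      Finset.measurable_prod _ fun j _ => measurable_const.sub ((hXmeas (π j)).div_const _)
    refine ⟨hmeas.aestronglyMeasurable, ?_⟩
    apply MeasureTheory.HasFiniteIntegral.of_bounded (C := (1:ℝ))
    filter_upwards with ω
    rw [Real.norm_eq_abs, abs_le]
    have hfac : ∀ j ∈ Iset N π i, 0 ≤ 1 - X ω (π j) / ((k:ℝ) - sigma N π i) ∧
        1 - X ω (π j) / ((k:ℝ) - sigma N π i) ≤ 1 := by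
      intro j hj
      simp only [Iset, Finset.mem_filter, Finset.mem_Icc] at hj
      have hπj : π j ∈ Set.Icc 1 (2*N) := hbij.mapsTo (by simp only [Set.mem_Icc]; omega)
      simp only [Set.mem_Icc] at hπj
      have hx := hX01 ω (π j) (by simp only [Finset.mem_Icc]; omega)
      have hx0 : 0 ≤ X ω (π j) := by rcases hx with hh|hh <;> simp [hh]
      have hx1 : X ω (π j) ≤ 1 := by rcases hx with hh|hh <;> simp [hh]
      constructor
      · have : X ω (π j) / ((k:ℝ) - sigma N π i) ≤ 1 :=
          div_le_one_of_le₀ (by linarith) (by linarith)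
        linarith
      · have : 0 ≤ X ω (π j) / ((k:ℝ) - sigma N π i) := div_nonneg hx0 (by linarith)
        linarith
    constructor
    · have h0 : (0:ℝ) ≤ ∏ j ∈ Iset N π i, (1 - X ω (π j) / ((k:ℝ) - sigma N π i)) :=
        Finset.prod_nonneg fun j hj => (hfac j hj).1
      linarith
    · exact Finset.prod_le_one (fun j hj => (hfac j hj).1) (fun j hj => (hfac j hj).2)
  unfold aux
  rw [MeasureTheory.integral_finset_sum]
  · apply Finset.sum_le_sum
    intro i hi
    obtain ⟨hα, hr, hint⟩ := hmain i hi
    rw [MeasureTheory.integral_const_mul,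
        MeasureTheory.integral_sub (integrable_const 1) hint,
        MeasureTheory.integral_const]
    simp only [probReal_univ, smul_eq_mul, one_mul]
    have hC : 0 ≤ alpha c π i * ((k:ℝ) - sigma N π i) := mul_nonneg hα (by linarith)
    have hp := hprod i hi
    exact mul_le_mul_of_nonneg_left (by linarith) hC
  · intro i hi
    obtain ⟨hα, hr, hint⟩ := hmain i hi
    exact ((integrable_const 1).sub hint).const_mul _


end ACAI
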